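/- Assume d ≥ 2. For every δ > 0, ‖g(δ) − ∫_S sign(⟪∇S(x_t), u⟫) · u dσ(u)‖ ≤ 2·q(δ); that is, replacing the sign of S(x_t + δu) by the sign of the linearization ⟪∇S(x_t), u⟫ changes the population estimate by at most twice the σ-measure of the band {u ∈ S : |⟪∇S(x_t), u⟫| ≤ Lδ/2}. -/

import Mathlib

open MeasureTheory Metric Filter
open scoped RealInnerProductSpace ENNReal

/-- sign(t) = 1 if t > 0 and -1 otherwise. -/
noncomputable def sgn (t : ℝ) : ℝ := if 0 < t then 1 else -1

/-- The uniform probability measure on the unit sphere of `EuclideanSpace ℝ (Fin d)`: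
the (d-1)-dimensional Hausdorff measure restricted to the sphere, normalized to mass 1. -/
noncomputable def sphereUniform (d : ℕ) : Measure (EuclideanSpace ℝ (Fin d)) :=
  (μH[(d : ℝ) - 1] (Metric.sphere (0 : EuclideanSpace ℝ (Fin d)) 1))⁻¹ •
    (μH[(d : ℝ) - 1]).restrict (Metric.sphere (0 : EuclideanSpace ℝ (Fin d)) 1)

/-- The population gradient-direction estimate
`g(δ) = ∫_S sign(S (x_t + δ u)) · u dσ(u)`. -/
noncomputable def gEst (d : ℕ) (S : EuclideanSpace ℝ (Fin d) → ℝ)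
    (xt : EuclideanSpace ℝ (Fin d)) (δ : ℝ) : EuclideanSpace ℝ (Fin d) :=
  ∫ u, sgn (S (xt + δ • u)) • u ∂(sphereUniform d)

lemma abs_sgn (t : ℝ) : |sgn t| = 1 := by unfold sgn; split <;> simp

lemma measurable_sgn : Measurable sgn := by
  unfold sgn
  exact Measurable.ite measurableSet_Ioi measurable_const measurable_const

lemma taylor_le {d : ℕ} {L : ℝ} (hL0 : 0 ≤ L) (S : EuclideanSpace ℝ (Fin d) → ℝ)
    (hS : Differentiable ℝ S)
    (hLip : ∀ x y : EuclideanSpace ℝ (Fin d),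
      ‖gradient S x - gradient S y‖ ≤ L * ‖x - y‖)
    (x v : EuclideanSpace ℝ (Fin d)) :
    |S (x + v) - S x - ⟪gradient S x, v⟫| ≤ L / 2 * ‖v‖ ^ 2 := by
  have hderiv : ∀ t : ℝ, HasDerivAt (fun t : ℝ => S (x + t • v))
      ⟪gradient S (x + t • v), v⟫ t := by
    intro t
    have h1 : HasDerivAt (fun t : ℝ => x + t • v) v t := by
      simpa using ((hasDerivAt_id t).smul_const v).const_add x
    have h2 := ((hS (x + t • v)).hasGradientAt).hasFDerivAt
    have h3 := (hS (x + t • v)).hasFDerivAt.comp_hasDerivAt t h1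
    rw [gradient, InnerProductSpace.toDual_symm_apply]
    exact h3
  have hgradcont : Continuous (gradient S) := by
    have : LipschitzWith L.toNNReal (gradient S) := by
      refine LipschitzWith.of_dist_le_mul fun a b => ?_
      simpa [dist_eq_norm, Real.coe_toNNReal L hL0] using hLip a b
    exact this.continuous
  have hcont : Continuous fun t : ℝ => ⟪gradient S (x + t • v), v⟫ := by
    exact (hgradcont.comp (by continuity)).inner continuous_const
  have key : ∫ t in (0:ℝ)..1, ⟪gradient S (x + t • v), v⟫ = S (x + v) - S x := by
    have := intervalIntegral.integral_eq_sub_of_hasDerivAt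
      (f := fun t : ℝ => S (x + t • v)) (fun t _ => hderiv t)
      (hcont.intervalIntegrable 0 1)
    simpa using this
  have hre : S (x + v) - S x - ⟪gradient S x, v⟫
      = ∫ t in (0:ℝ)..1, (⟪gradient S (x + t • v), v⟫ - ⟪gradient S x, v⟫) := by
    rw [intervalIntegral.integral_sub (hcont.intervalIntegrable _ _)
      (intervalIntegrable_const), key]
    simp
  rw [hre, ← Real.norm_eq_abs]
  have hbound : ∀ᵐ t ∂(volume.restrict (Set.uIoc (0:ℝ) 1)),
      ‖⟪gradient S (x + t • v), v⟫ - ⟪gradient S x, v⟫‖ ≤ L * ‖v‖ ^ 2 * t := by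
    refine ae_restrict_of_forall_mem measurableSet_uIoc fun t ht => ?_
    rw [Set.uIoc_of_le (by norm_num : (0:ℝ) ≤ 1)] at ht
    have ht0 : 0 < t := ht.1
    rw [← inner_sub_left, Real.norm_eq_abs]
    calc |⟪gradient S (x + t • v) - gradient S x, v⟫|
        ≤ ‖gradient S (x + t • v) - gradient S x‖ * ‖v‖ := abs_real_inner_le_norm _ _
      _ ≤ (L * ‖(x + t • v) - x‖) * ‖v‖ := by
          gcongr; exact hLip _ _
      _ = L * ‖v‖ ^ 2 * t := by
          simp [norm_smul, abs_of_pos ht0]; ring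
  have := intervalIntegral.norm_integral_le_abs_of_norm_le hbound
    (((continuous_const.mul continuous_id).intervalIntegrable 0 1))
  refine this.trans ?_
  rw [intervalIntegral.integral_const_mul, integral_id]
  rw [abs_of_nonneg (by positivity)]
  nlinarith [sq_nonneg ‖v‖]

lemma sphereUniform_le_one (d : ℕ) (s : Set (EuclideanSpace ℝ (Fin d))) :
    sphereUniform d s ≤ 1 := by
  unfold sphereUniform
  rw [Measure.smul_apply, smul_eq_mul]
  refine le_trans ?_ (ENNReal.inv_mul_le_one
    (μH[(d : ℝ) - 1] (Metric.sphere (0 : EuclideanSpace ℝ (Fin d)) 1)))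
  refine mul_le_mul_right ?_ _
  rw [Measure.restrict_apply' isClosed_sphere.measurableSet]
  exact measure_mono Set.inter_subset_right

instance sphereUniform_finite (d : ℕ) : IsFiniteMeasure (sphereUniform d) :=
  ⟨lt_of_le_of_lt (sphereUniform_le_one d _) ENNReal.one_lt_top⟩

lemma sphereUniform_ae_norm (d : ℕ) : ∀ᵐ u ∂(sphereUniform d), ‖u‖ = 1 := by
  rw [ae_iff]
  unfold sphereUniform
  rw [Measure.smul_apply, smul_eq_mul,
    Measure.restrict_apply₀ (by
      apply MeasurableSet.nullMeasurableSet
      exact (measurableSet_eq_fun measurable_norm measurable_const).compl)]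
  have : {a : EuclideanSpace ℝ (Fin d) | ¬ ‖a‖ = 1} ∩
      Metric.sphere (0 : EuclideanSpace ℝ (Fin d)) 1 = ∅ := by
    ext u; simp [mem_sphere_iff_norm]
  simp [this]

/-- For `d ≥ 2` and every `δ > 0`,
`‖g(δ) − ∫_S sign(⟪∇S(x_t),u⟫)·u dσ(u)‖ ≤ 2·q(δ)`, where
`q(δ) = σ({u : |⟪∇S(x_t),u⟫| ≤ Lδ/2})`. -/
theorem stmt_4 (d : ℕ) (hd : 2 ≤ d) (L : ℝ) (hL : 0 < L)
    (S : EuclideanSpace ℝ (Fin d) → ℝ) (hS : Differentiable ℝ S)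
    (hLip : ∀ x y : EuclideanSpace ℝ (Fin d),
      ‖gradient S x - gradient S y‖ ≤ L * ‖x - y‖)
    (xt : EuclideanSpace ℝ (Fin d)) (hxt : S xt = 0) (hgrad : gradient S xt ≠ 0)
    (q : ℝ → ℝ)
    (hq : ∀ δ : ℝ, q δ =
      ((sphereUniform d) {u | |⟪gradient S xt, u⟫| ≤ L * δ / 2}).toReal)
    (δ : ℝ) (hδ : 0 < δ) :
    ‖gEst d S xt δ - ∫ u, sgn ⟪gradient S xt, u⟫ • u ∂(sphereUniform d)‖ ≤
      2 * q δ := by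
  set μ := sphereUniform d
  set g0 := gradient S xt with hg0
  set A : Set (EuclideanSpace ℝ (Fin d)) := {u | |⟪g0, u⟫| ≤ L * δ / 2} with hA_def
  set f1 : EuclideanSpace ℝ (Fin d) → EuclideanSpace ℝ (Fin d) :=
    fun u => sgn (S (xt + δ • u)) • u with hf1_def
  set f2 : EuclideanSpace ℝ (Fin d) → EuclideanSpace ℝ (Fin d) :=
    fun u => sgn ⟪g0, u⟫ • u with hf2_def
  have hA : MeasurableSet A := by
    exact measurableSet_le
      ((continuous_const.inner continuous_id).abs.measurable) measurable_const
  have hnorm := sphereUniform_ae_norm d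
  have hm1 : AEStronglyMeasurable f1 μ := by
    apply Measurable.aestronglyMeasurable
    exact (measurable_sgn.comp ((hS.continuous.comp
      (by fun_prop : Continuous fun u : EuclideanSpace ℝ (Fin d) => xt + δ • u)).measurable)).smul
      measurable_id
  have hm2 : AEStronglyMeasurable f2 μ := by
    apply Measurable.aestronglyMeasurable
    exact (measurable_sgn.comp
      ((continuous_const.inner continuous_id).measurable)).smul measurable_id
  have hnorm_f : ∀ (t : ℝ) (u : EuclideanSpace ℝ (Fin d)), ‖u‖ = 1 →
      ‖sgn t • u‖ = 1 := by
    intro t u hu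
    rw [norm_smul, Real.norm_eq_abs, abs_sgn, hu, one_mul]
  have hf1 : Integrable f1 μ := by
    refine Integrable.mono' (integrable_const 1) hm1 ?_
    filter_upwards [hnorm] with u hu
    rw [hnorm_f _ u hu]
  have hf2 : Integrable f2 μ := by
    refine Integrable.mono' (integrable_const 1) hm2 ?_
    filter_upwards [hnorm] with u hu
    rw [hnorm_f _ u hu]
  -- key sign equality off the band
  have hsign : ∀ u : EuclideanSpace ℝ (Fin d), ‖u‖ = 1 → u ∉ A →
      sgn (S (xt + δ • u)) = sgn ⟪g0, u⟫ := by
    intro u hu huA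
    have hband : L * δ / 2 < |⟪g0, u⟫| := by
      simpa [hA_def, not_le] using huA
    have htay := taylor_le hL.le S hS hLip xt (δ • u)
    rw [hxt, real_inner_smul_right] at htay
    have hnv : ‖δ • u‖ = δ := by
      rw [norm_smul, Real.norm_eq_abs, abs_of_pos hδ, hu, mul_one]
    rw [hnv] at htay
    have habs := abs_le.1 htay
    set a := S (xt + δ • u)
    set b := ⟪g0, u⟫
    have hb0 : b ≠ 0 := by
      intro h
      rw [h] at hband
      simp at hband
      nlinarith
    unfold sgn
    rcases lt_trichotomy b 0 with hb | hb | hb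
    · have hba : |b| = -b := abs_of_neg hb
      rw [hba] at hband
      have ha : ¬ 0 < a := by nlinarith
      simp [ha, not_lt.2 hb.le, hb.not_gt]
    · exact absurd hb hb0
    · have hba : |b| = b := abs_of_pos hb
      rw [hba] at hband
      have ha : 0 < a := by nlinarith
      simp [ha, hb]
  have hmono : ∀ᵐ u ∂μ, ‖f1 u - f2 u‖ ≤ A.indicator (fun _ => (2:ℝ)) u := by
    filter_upwards [hnorm] with u hu
    by_cases hmem : u ∈ A
    · rw [Set.indicator_of_mem hmem]
      calc ‖f1 u - f2 u‖ ≤ ‖f1 u‖ + ‖f2 u‖ := norm_sub_le _ _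
        _ = 2 := by rw [hnorm_f _ u hu, hnorm_f _ u hu]; norm_num
    · rw [Set.indicator_of_notMem hmem]
      have : f1 u = f2 u := by
        simp only [hf1_def, hf2_def, hsign u hu hmem]
      simp [this]
  have hAfin : μ A ≠ ⊤ := (lt_of_le_of_lt (sphereUniform_le_one d A)
    ENNReal.one_lt_top).ne
  calc ‖gEst d S xt δ - ∫ u, sgn ⟪g0, u⟫ • u ∂μ‖
      = ‖∫ u, (f1 u - f2 u) ∂μ‖ := by rw [gEst, integral_sub hf1 hf2]
    _ ≤ ∫ u, ‖f1 u - f2 u‖ ∂μ := norm_integral_le_integral_norm _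
    _ ≤ ∫ u, A.indicator (fun _ => (2:ℝ)) u ∂μ := by
        exact integral_mono_ae (hf1.sub hf2).norm
          ((integrable_const 2).indicator hA) hmono
    _ = (μ A).toReal • (2:ℝ) := integral_indicator_const (2:ℝ) hA
    _ = 2 * q δ := by rw [hq δ, smul_eq_mul]; ring
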